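/- arXiv:2006.02935 — 2 statements merged into one kernel-verified Lean document; each statement's English description precedes it below -/
import Mathlib

section
/- The minimal value μ(a,b,n) of the optimal control problem is non-increasing in the dimension: if n ≤ m, then μ(a,b,m) ≤ μ(a,b,n). Concretely, given any admissible control S ∈ Sym(n)⁺ with a·I ≤ ∫₀ᵀ S ≤ b·I and initial condition ω₀ ∈ 𝕊ⁿ⁻¹, the block-diagonal control S̃ = diag(S, a·I_{m-n}) is admissible in dimension m, the trajectory starting from ω̃₀ = (ω₀, 0) is ω̃ = (ω, 0), and J(S̃, ω̃₀) = J(S, ω₀). -/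
open Matrix MeasureTheory intervalIntegral

/-- The set of costs `J(S,ω₀) = ∫₀ᵀ ωᵀSω dt` over admissible controls `S` (measurable,
positive semi-definite, with `a•1 ≤ ∫₀ᵀ S ≤ b•1`) and initial conditions `ω₀ ∈ 𝕊ⁿ⁻¹`,
where `ω` solves `ω' = -Sω + (ωᵀSω)ω`, `ω(0) = ω₀`. Its infimum is `μ(a,b,T,n)`. -/
def costSet (a b T : ℝ) (n : ℕ) : Set ℝ :=
  {J | ∃ (S : ℝ → Matrix (Fin n) (Fin n) ℝ) (ω : ℝ → Fin n → ℝ),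
    (∀ i j, Measurable fun t => S t i j) ∧
    (∀ t ∈ Set.Icc (0:ℝ) T, (S t).PosSemidef) ∧
    ((Matrix.of fun i j => ∫ t in (0:ℝ)..T, S t i j)
        - a • (1 : Matrix (Fin n) (Fin n) ℝ)).PosSemidef ∧
    (b • (1 : Matrix (Fin n) (Fin n) ℝ)
        - Matrix.of fun i j => ∫ t in (0:ℝ)..T, S t i j).PosSemidef ∧
    (∑ i, ω 0 i ^ 2 = 1) ∧
    (∀ t ∈ Set.Icc (0:ℝ) T,
      HasDerivAt ω (-(S t).mulVec (ω t) + (ω t ⬝ᵥ (S t).mulVec (ω t)) • ω t) t) ∧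
    J = ∫ t in (0:ℝ)..T, ω t ⬝ᵥ (S t).mulVec (ω t)}


/-- The block-diagonal extension `S̃ = diag (S, (a/T)•1_{m-n})` of an admissible
control in dimension `n` to dimension `m ≥ n`. -/
noncomputable def blockExt (a T : ℝ) (n m : ℕ) (S : ℝ → Matrix (Fin n) (Fin n) ℝ) :
    ℝ → Matrix (Fin m) (Fin m) ℝ :=
  fun t => Matrix.of fun i j =>
    if h1 : (i : ℕ) < n then
      (if h2 : (j : ℕ) < n then S t ⟨i, h1⟩ ⟨j, h2⟩ else 0)
    else (if i = j then a / T else 0)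

/-- The extension `(ω, 0)` of a trajectory to dimension `m ≥ n`. -/
def vecExt (n m : ℕ) (ω : ℝ → Fin n → ℝ) : ℝ → Fin m → ℝ :=
  fun t i => if h : (i : ℕ) < n then ω t ⟨i, h⟩ else 0

section Aux

variable {n m : ℕ}

/-- The reindexing equivalence `Fin m ≃ Fin n ⊕ Fin (m-n)`. -/
def eEq (hnm : n ≤ m) : Fin m ≃ Fin n ⊕ Fin (m - n) :=
  (finCongr (by omega : m = n + (m - n))).trans finSumFinEquiv.symm

lemma eEq_lt (hnm : n ≤ m) (i : Fin m) (h : (i : ℕ) < n) :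
    eEq hnm i = Sum.inl ⟨i, h⟩ := by
  have h1 : (finCongr (by omega : m = n + (m - n)) i) = Fin.castAdd (m - n) ⟨i, h⟩ := by
    apply Fin.ext; simp
  simp only [eEq, Equiv.trans_apply, h1, finSumFinEquiv_symm_apply_castAdd]

lemma eEq_ge (hnm : n ≤ m) (i : Fin m) (h : ¬ (i : ℕ) < n) :
    eEq hnm i = Sum.inr ⟨(i : ℕ) - n, by omega⟩ := by
  have h1 : (finCongr (by omega : m = n + (m - n)) i) = Fin.natAdd n ⟨(i : ℕ) - n, by omega⟩ := by
    apply Fin.ext; simp; omega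
  simp only [eEq, Equiv.trans_apply, h1, finSumFinEquiv_symm_apply_natAdd]

lemma dot_comp_equiv {α β : Type*} [Fintype α] [Fintype β] (e : α ≃ β) (f g : β → ℝ) :
    (f ∘ e) ⬝ᵥ (g ∘ e) = f ⬝ᵥ g :=
  Fintype.sum_equiv e _ _ (fun _ => rfl)

lemma psd_fromBlocks_diag {p q : ℕ} {A : Matrix (Fin p) (Fin p) ℝ} {D : Matrix (Fin q) (Fin q) ℝ}
    (hA : A.PosSemidef) (hD : D.PosSemidef) : (fromBlocks A 0 0 D).PosSemidef := by
  refine .of_dotProduct_mulVec_nonneg ?_ ?_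
  · show _ᴴ = _
    have hA' : Aᵀ = A := isHermitian_iff_isSymm.mp hA.1
    have hD' : Dᵀ = D := isHermitian_iff_isSymm.mp hD.1
    simp [fromBlocks_conjTranspose, fromBlocks_transpose, hA', hD']
  · intro x
    rw [fromBlocks_mulVec]
    simp only [zero_mulVec, add_zero, zero_add]
    have hx : star x = x := by
      funext i; simp
    rw [hx]
    have : x ⬝ᵥ Sum.elim (A *ᵥ x ∘ Sum.inl) (D *ᵥ x ∘ Sum.inr) =
        (x ∘ Sum.inl) ⬝ᵥ (A *ᵥ (x ∘ Sum.inl)) + (x ∘ Sum.inr) ⬝ᵥ (D *ᵥ (x ∘ Sum.inr)) := by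
      rw [← sumElim_dotProduct_sumElim]
      congr 1
      funext s; cases s <;> rfl
    rw [this]
    have h1 := hA.dotProduct_mulVec_nonneg (x ∘ Sum.inl)
    have h2 := hD.dotProduct_mulVec_nonneg (x ∘ Sum.inr)
    exact add_nonneg (by simpa using h1) (by simpa using h2)

lemma psd_smul_one {k : ℕ} {c : ℝ} (hc : 0 ≤ c) :
    (c • (1 : Matrix (Fin k) (Fin k) ℝ)).PosSemidef := by
  have : c • (1 : Matrix (Fin k) (Fin k) ℝ) = Matrix.diagonal (fun _ => c) := by
    ext i j; by_cases h : i = j <;> simp [Matrix.one_apply, h, Matrix.diagonal]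
  rw [this]
  exact PosSemidef.diagonal (fun i => hc)

end Aux

section Struct

variable {n m : ℕ}

lemma vecExt_eq (hnm : n ≤ m) (ω : ℝ → Fin n → ℝ) (t : ℝ) :
    vecExt n m ω t = Sum.elim (ω t) 0 ∘ (eEq hnm) := by
  funext i
  by_cases h : (i : ℕ) < n
  · simp [vecExt, h, Function.comp, eEq_lt hnm i h]
  · simp [vecExt, h, Function.comp, eEq_ge hnm i h]

lemma blockExt_eq (a T : ℝ) (hnm : n ≤ m) (S : ℝ → Matrix (Fin n) (Fin n) ℝ) (t : ℝ) :
    blockExt a T n m S t =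
      (fromBlocks (S t) 0 0 ((a / T) • (1 : Matrix (Fin (m - n)) (Fin (m - n)) ℝ))).submatrix
        (eEq hnm) (eEq hnm) := by
  ext i j
  by_cases h1 : (i : ℕ) < n <;> by_cases h2 : (j : ℕ) < n
  · simp [blockExt, submatrix_apply, eEq_lt hnm i h1, eEq_lt hnm j h2, h1, h2]
  · simp [blockExt, submatrix_apply, eEq_lt hnm i h1, eEq_ge hnm j h2, h1, h2]
  · have hij : ¬ i = j := fun e => h1 (by rw [e]; exact h2)
    simp [blockExt, submatrix_apply, eEq_ge hnm i h1, eEq_lt hnm j h2, h1, h2, hij]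
  · simp only [blockExt, Matrix.of_apply, dif_neg h1, submatrix_apply,
      eEq_ge hnm i h1, eEq_ge hnm j h2, fromBlocks_apply₂₂, Matrix.smul_apply,
      Matrix.one_apply, smul_eq_mul]
    by_cases h : i = j
    · have : ((⟨(i:ℕ) - n, by omega⟩ : Fin (m - n)) = ⟨(j:ℕ) - n, by omega⟩) := by
        rw [Fin.ext_iff]; simp; rw [h]
      simp [h, this]
    · have hv : (i : ℕ) ≠ (j : ℕ) := fun e => h (Fin.ext e)
      have : ¬ ((⟨(i:ℕ) - n, by omega⟩ : Fin (m - n)) = ⟨(j:ℕ) - n, by omega⟩) := by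
        rw [Fin.ext_iff]; simp; omega
      simp [h, this]

lemma blockExt_mulVec (a T : ℝ) (hnm : n ≤ m) (S : ℝ → Matrix (Fin n) (Fin n) ℝ)
    (ω : ℝ → Fin n → ℝ) (t : ℝ) :
    blockExt a T n m S t *ᵥ vecExt n m ω t = Sum.elim (S t *ᵥ ω t) 0 ∘ (eEq hnm) := by
  rw [blockExt_eq a T hnm S t, vecExt_eq hnm ω t, submatrix_mulVec_equiv]
  have h0 : (Sum.elim (ω t) 0 ∘ (eEq hnm)) ∘ (eEq hnm).symm
      = Sum.elim (ω t) (0 : Fin (m - n) → ℝ) := by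
    funext s; simp
  rw [h0, fromBlocks_mulVec]
  simp [Sum.elim_comp_inl, Sum.elim_comp_inr]

lemma blockExt_quad (a T : ℝ) (hnm : n ≤ m) (S : ℝ → Matrix (Fin n) (Fin n) ℝ)
    (ω : ℝ → Fin n → ℝ) (t : ℝ) :
    vecExt n m ω t ⬝ᵥ (blockExt a T n m S t *ᵥ vecExt n m ω t) = ω t ⬝ᵥ (S t *ᵥ ω t) := by
  rw [blockExt_mulVec a T hnm S ω t, vecExt_eq hnm ω t, dot_comp_equiv,
    sumElim_dotProduct_sumElim]
  simp

lemma blockExt_integral (a T : ℝ) (hT : T ≠ 0) (hnm : n ≤ m)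
    (S : ℝ → Matrix (Fin n) (Fin n) ℝ) :
    (Matrix.of fun i j => ∫ t in (0:ℝ)..T, blockExt a T n m S t i j) =
      (fromBlocks (Matrix.of fun i j => ∫ t in (0:ℝ)..T, S t i j) 0 0
        (a • (1 : Matrix (Fin (m - n)) (Fin (m - n)) ℝ))).submatrix (eEq hnm) (eEq hnm) := by
  ext i j
  by_cases h1 : (i : ℕ) < n <;> by_cases h2 : (j : ℕ) < n
  · simp [blockExt, submatrix_apply, eEq_lt hnm i h1, eEq_lt hnm j h2, h1, h2]
  · simp [blockExt, submatrix_apply, eEq_lt hnm i h1, eEq_ge hnm j h2, h1, h2]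
  · have hij : ¬ i = j := fun e => h1 (by rw [e]; exact h2)
    simp [blockExt, submatrix_apply, eEq_ge hnm i h1, eEq_lt hnm j h2, h1, h2, hij]
  · simp only [blockExt, Matrix.of_apply, dif_neg h1, submatrix_apply,
      eEq_ge hnm i h1, eEq_ge hnm j h2, fromBlocks_apply₂₂, Matrix.smul_apply,
      Matrix.one_apply, smul_eq_mul]
    by_cases h : i = j
    · have : ((⟨(i:ℕ) - n, by omega⟩ : Fin (m - n)) = ⟨(j:ℕ) - n, by omega⟩) := by
        rw [Fin.ext_iff]; simp; rw [h]
      simp only [h, if_true, this, mul_one, intervalIntegral.integral_const, smul_eq_mul, sub_zero]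
      rw [mul_comm, div_mul_cancel₀ a hT]
    · have hv : (i : ℕ) ≠ (j : ℕ) := fun e => h (Fin.ext e)
      have : ¬ ((⟨(i:ℕ) - n, by omega⟩ : Fin (m - n)) = ⟨(j:ℕ) - n, by omega⟩) := by
        rw [Fin.ext_iff]; simp; omega
      simp [h, this]

lemma smul_one_reindex (hnm : n ≤ m) (c : ℝ) :
    c • (1 : Matrix (Fin m) (Fin m) ℝ) =
      (fromBlocks (c • (1 : Matrix (Fin n) (Fin n) ℝ)) 0 0
        (c • (1 : Matrix (Fin (m - n)) (Fin (m - n)) ℝ))).submatrix (eEq hnm) (eEq hnm) := by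
  have h1 : (fromBlocks (c • (1 : Matrix (Fin n) (Fin n) ℝ)) 0 0
      (c • (1 : Matrix (Fin (m - n)) (Fin (m - n)) ℝ)))
      = c • (1 : Matrix (Fin n ⊕ Fin (m - n)) (Fin n ⊕ Fin (m - n)) ℝ) := by
    rw [← fromBlocks_one]
    rw [fromBlocks_smul]
    simp
  rw [h1]
  rw [show ((c • (1 : Matrix (Fin n ⊕ Fin (m-n)) (Fin n ⊕ Fin (m-n)) ℝ)).submatrix (eEq hnm) (eEq hnm)) = c • ((1 : Matrix (Fin n ⊕ Fin (m-n)) (Fin n ⊕ Fin (m-n)) ℝ).submatrix (eEq hnm) (eEq hnm)) from rfl]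
  rw [submatrix_one_equiv]

lemma fromBlocks_sub' {p q : ℕ} (A A' : Matrix (Fin p) (Fin p) ℝ)
    (D D' : Matrix (Fin q) (Fin q) ℝ) :
    fromBlocks A 0 0 D - fromBlocks A' 0 0 D' = fromBlocks (A - A') 0 0 (D - D') := by
  ext i j
  rcases i with i | i <;> rcases j with j | j <;> simp [fromBlocks]

end Struct

lemma key_lemma (n m : ℕ) (hnm : n ≤ m) (a b T : ℝ) (ha : 0 < a) (hab : a ≤ b) (hT : 0 < T)
    (S : ℝ → Matrix (Fin n) (Fin n) ℝ) (ω : ℝ → Fin n → ℝ)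
    (hpsd : ∀ t ∈ Set.Icc (0:ℝ) T, (S t).PosSemidef)
    (hlow : ((Matrix.of fun i j => ∫ t in (0:ℝ)..T, S t i j)
        - a • (1 : Matrix (Fin n) (Fin n) ℝ)).PosSemidef)
    (hup : (b • (1 : Matrix (Fin n) (Fin n) ℝ)
        - Matrix.of fun i j => ∫ t in (0:ℝ)..T, S t i j).PosSemidef)
    (hinit : ∑ i, ω 0 i ^ 2 = 1)
    (hode : ∀ t ∈ Set.Icc (0:ℝ) T,
      HasDerivAt ω (-(S t).mulVec (ω t) + (ω t ⬝ᵥ (S t).mulVec (ω t)) • ω t) t) :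
    ((∀ t ∈ Set.Icc (0:ℝ) T, (blockExt a T n m S t).PosSemidef) ∧
     ((Matrix.of fun i j => ∫ t in (0:ℝ)..T, blockExt a T n m S t i j)
        - a • (1 : Matrix (Fin m) (Fin m) ℝ)).PosSemidef ∧
     (b • (1 : Matrix (Fin m) (Fin m) ℝ)
        - Matrix.of fun i j => ∫ t in (0:ℝ)..T, blockExt a T n m S t i j).PosSemidef ∧
     (∑ i, vecExt n m ω 0 i ^ 2 = 1) ∧
     (∀ t ∈ Set.Icc (0:ℝ) T,
       HasDerivAt (vecExt n m ω)
         (-(blockExt a T n m S t).mulVec (vecExt n m ω t)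
           + (vecExt n m ω t ⬝ᵥ (blockExt a T n m S t).mulVec (vecExt n m ω t))
             • vecExt n m ω t) t) ∧
     (∫ t in (0:ℝ)..T, vecExt n m ω t ⬝ᵥ (blockExt a T n m S t).mulVec (vecExt n m ω t))
        = ∫ t in (0:ℝ)..T, ω t ⬝ᵥ (S t).mulVec (ω t)) := by
  refine ⟨?_, ?_, ?_, ?_, ?_, ?_⟩
  · -- pointwise PSD
    intro t ht
    rw [blockExt_eq a T hnm S t]
    exact (psd_fromBlocks_diag (hpsd t ht) (psd_smul_one (div_nonneg ha.le hT.le))).submatrix _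
  · -- lower bound
    rw [blockExt_integral a T hT.ne' hnm S, smul_one_reindex hnm a]
    rw [show (fromBlocks (Matrix.of fun i j => ∫ t in (0:ℝ)..T, S t i j) 0 0
          (a • (1 : Matrix (Fin (m - n)) (Fin (m - n)) ℝ))).submatrix (eEq hnm) (eEq hnm)
        - (fromBlocks (a • (1 : Matrix (Fin n) (Fin n) ℝ)) 0 0
          (a • (1 : Matrix (Fin (m - n)) (Fin (m - n)) ℝ))).submatrix (eEq hnm) (eEq hnm)
        = ((fromBlocks (Matrix.of fun i j => ∫ t in (0:ℝ)..T, S t i j) 0 0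
          (a • (1 : Matrix (Fin (m - n)) (Fin (m - n)) ℝ))
          - fromBlocks (a • (1 : Matrix (Fin n) (Fin n) ℝ)) 0 0
          (a • (1 : Matrix (Fin (m - n)) (Fin (m - n)) ℝ))).submatrix (eEq hnm) (eEq hnm))
        from rfl]
    rw [fromBlocks_sub', sub_self]
    exact (psd_fromBlocks_diag hlow PosSemidef.zero).submatrix _
  · -- upper bound
    rw [blockExt_integral a T hT.ne' hnm S, smul_one_reindex hnm b]
    rw [show (fromBlocks (b • (1 : Matrix (Fin n) (Fin n) ℝ)) 0 0
          (b • (1 : Matrix (Fin (m - n)) (Fin (m - n)) ℝ))).submatrix (eEq hnm) (eEq hnm)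
        - (fromBlocks (Matrix.of fun i j => ∫ t in (0:ℝ)..T, S t i j) 0 0
          (a • (1 : Matrix (Fin (m - n)) (Fin (m - n)) ℝ))).submatrix (eEq hnm) (eEq hnm)
        = ((fromBlocks (b • (1 : Matrix (Fin n) (Fin n) ℝ)) 0 0
          (b • (1 : Matrix (Fin (m - n)) (Fin (m - n)) ℝ))
          - fromBlocks (Matrix.of fun i j => ∫ t in (0:ℝ)..T, S t i j) 0 0
          (a • (1 : Matrix (Fin (m - n)) (Fin (m - n)) ℝ))).submatrix (eEq hnm) (eEq hnm))
        from rfl]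
    rw [fromBlocks_sub', ← sub_smul]
    exact (psd_fromBlocks_diag hup (psd_smul_one (sub_nonneg.mpr hab))).submatrix _
  · -- initial condition
    rw [vecExt_eq hnm ω 0]
    have h1 : ∑ i : Fin m, ((Sum.elim (ω 0) 0 ∘ (eEq hnm)) i) ^ 2
        = ∑ s : Fin n ⊕ Fin (m - n), (Sum.elim (ω 0) (0 : Fin (m-n) → ℝ) s) ^ 2 :=
      Fintype.sum_equiv (eEq hnm) _ _ (fun i => rfl)
    rw [h1, Fintype.sum_sum_type]
    simpa using hinit
  · -- ODE
    intro t ht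
    have hvec : -(blockExt a T n m S t).mulVec (vecExt n m ω t)
        + (vecExt n m ω t ⬝ᵥ (blockExt a T n m S t).mulVec (vecExt n m ω t)) • vecExt n m ω t
        = Sum.elim (-(S t).mulVec (ω t) + (ω t ⬝ᵥ (S t).mulVec (ω t)) • ω t) 0 ∘ (eEq hnm) := by
      rw [show (blockExt a T n m S t).mulVec (vecExt n m ω t)
          = blockExt a T n m S t *ᵥ vecExt n m ω t from rfl]
      rw [blockExt_quad a T hnm S ω t, blockExt_mulVec a T hnm S ω t, vecExt_eq hnm ω t]
      funext i
      rcases hs : (eEq hnm) i with s | s <;> simp [Function.comp, hs]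
    rw [hvec]
    rw [hasDerivAt_pi]
    intro i
    by_cases h : (i : ℕ) < n
    · have hfun : (fun x => vecExt n m ω x i) = fun x => ω x ⟨i, h⟩ := by
        funext u; simp [vecExt, h]
      have hval : (Sum.elim (-(S t).mulVec (ω t) + (ω t ⬝ᵥ (S t).mulVec (ω t)) • ω t) 0
            ∘ (eEq hnm)) i
          = (-(S t).mulVec (ω t) + (ω t ⬝ᵥ (S t).mulVec (ω t)) • ω t) ⟨i, h⟩ := by
        simp [Function.comp, eEq_lt hnm i h]
      rw [hfun, hval]
      exact hasDerivAt_pi.mp (hode t ht) ⟨i, h⟩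
    · have hfun : (fun x => vecExt n m ω x i) = fun _ => (0:ℝ) := by
        funext u; simp [vecExt, h]
      have hval : (Sum.elim (-(S t).mulVec (ω t) + (ω t ⬝ᵥ (S t).mulVec (ω t)) • ω t) 0
            ∘ (eEq hnm)) i = 0 := by
        simp [Function.comp, eEq_ge hnm i h]
      rw [hfun, hval]
      exact hasDerivAt_const t 0
  · -- cost equality
    simp only [show ∀ t, (vecExt n m ω t ⬝ᵥ (blockExt a T n m S t).mulVec (vecExt n m ω t))
        = ω t ⬝ᵥ (S t).mulVec (ω t) from fun t => blockExt_quad a T hnm S ω t]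

/-- Monotonicity in the dimension of the minimal value `μ(a,b,n)`: if `n ≤ m` then
`μ(a,b,m) ≤ μ(a,b,n)`.  Concretely, for any admissible control `S` and initial
condition `ω₀ ∈ 𝕊ⁿ⁻¹` with trajectory `ω`, the block-diagonal control
`S̃ = diag (S, (a/T)•1_{m-n})` is admissible in dimension `m`, the trajectory from
`ω̃₀ = (ω₀,0)` is `ω̃ = (ω,0)`, and `J(S̃, ω̃₀) = J(S, ω₀)`. -/
theorem mu_mono_dim (n m : ℕ) (hn : 1 ≤ n) (hnm : n ≤ m)
    (a b T : ℝ) (ha : 0 < a) (hab : a ≤ b) (hT : 0 < T) :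
    sInf (costSet a b T m) ≤ sInf (costSet a b T n) ∧
    ∀ (S : ℝ → Matrix (Fin n) (Fin n) ℝ) (ω : ℝ → Fin n → ℝ),
      (∀ t ∈ Set.Icc (0:ℝ) T, (S t).PosSemidef) →
      ((Matrix.of fun i j => ∫ t in (0:ℝ)..T, S t i j)
          - a • (1 : Matrix (Fin n) (Fin n) ℝ)).PosSemidef →
      (b • (1 : Matrix (Fin n) (Fin n) ℝ)
          - Matrix.of fun i j => ∫ t in (0:ℝ)..T, S t i j).PosSemidef →
      (∑ i, ω 0 i ^ 2 = 1) →
      (∀ t ∈ Set.Icc (0:ℝ) T,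
        HasDerivAt ω (-(S t).mulVec (ω t) + (ω t ⬝ᵥ (S t).mulVec (ω t)) • ω t) t) →
      ((∀ t ∈ Set.Icc (0:ℝ) T, (blockExt a T n m S t).PosSemidef) ∧
       ((Matrix.of fun i j => ∫ t in (0:ℝ)..T, blockExt a T n m S t i j)
          - a • (1 : Matrix (Fin m) (Fin m) ℝ)).PosSemidef ∧
       (b • (1 : Matrix (Fin m) (Fin m) ℝ)
          - Matrix.of fun i j => ∫ t in (0:ℝ)..T, blockExt a T n m S t i j).PosSemidef ∧
       (∑ i, vecExt n m ω 0 i ^ 2 = 1) ∧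
       (∀ t ∈ Set.Icc (0:ℝ) T,
         HasDerivAt (vecExt n m ω)
           (-(blockExt a T n m S t).mulVec (vecExt n m ω t)
             + (vecExt n m ω t ⬝ᵥ (blockExt a T n m S t).mulVec (vecExt n m ω t))
               • vecExt n m ω t) t) ∧
       (∫ t in (0:ℝ)..T, vecExt n m ω t ⬝ᵥ (blockExt a T n m S t).mulVec (vecExt n m ω t))
          = ∫ t in (0:ℝ)..T, ω t ⬝ᵥ (S t).mulVec (ω t)) := by
  constructor
  · -- sInf inequality
    apply csInf_le_csInf
    · -- BddBelow
      refine ⟨0, fun J hJ => ?_⟩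
      obtain ⟨S, ω, _, hpsd, _, _, _, _, rfl⟩ := hJ
      refine intervalIntegral.integral_nonneg hT.le (fun u hu => ?_)
      simpa using (hpsd u hu).dotProduct_mulVec_nonneg (ω u)
    · -- Nonempty of costSet n
      set c : Fin n := ⟨0, hn⟩ with hc
      set v : Fin n → ℝ := fun i => if i = c then 1 else 0 with hv
      have hvv : v ⬝ᵥ v = 1 := by
        rw [dotProduct]
        rw [Finset.sum_congr rfl (fun i _ => show v i * v i = if i = c then 1 else 0 by
          by_cases h : i = c <;> simp [hv, h])]
        simp [Finset.sum_ite_eq']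
      have hI : (Matrix.of fun i j =>
          ∫ t in (0:ℝ)..T, ((a/T) • (1 : Matrix (Fin n) (Fin n) ℝ)) i j)
          = a • (1 : Matrix (Fin n) (Fin n) ℝ) := by
        ext i j
        by_cases h : i = j
        · simp only [Matrix.of_apply, Matrix.smul_apply, Matrix.one_apply, h, if_true,
            smul_eq_mul, mul_one, intervalIntegral.integral_const, sub_zero]
          rw [mul_comm, div_mul_cancel₀ a hT.ne']
        · simp [Matrix.smul_apply, Matrix.one_apply, h]
      refine ⟨_, fun _ => (a/T) • (1 : Matrix (Fin n) (Fin n) ℝ), fun _ => v,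
        fun i j => measurable_const, fun t _ => psd_smul_one (div_nonneg ha.le hT.le),
        ?_, ?_, ?_, ?_, rfl⟩
      · rw [hI, sub_self]; exact PosSemidef.zero
      · rw [hI, ← sub_smul]; exact psd_smul_one (sub_nonneg.mpr hab)
      · rw [Finset.sum_congr rfl (fun i _ => show v i ^ 2 = if i = c then 1 else 0 by
          by_cases h : i = c <;> simp [hv, h])]
        simp [Finset.sum_ite_eq']
      · intro t _
        have h1 : ((a/T) • (1 : Matrix (Fin n) (Fin n) ℝ)) *ᵥ v = (a/T) • v := by
          rw [smul_mulVec, one_mulVec]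
        have hz : -(((a/T) • (1 : Matrix (Fin n) (Fin n) ℝ)).mulVec v)
            + (v ⬝ᵥ ((a/T) • (1 : Matrix (Fin n) (Fin n) ℝ)).mulVec v) • v = 0 := by
          rw [show ((a/T) • (1 : Matrix (Fin n) (Fin n) ℝ)).mulVec v
            = ((a/T) • (1 : Matrix (Fin n) (Fin n) ℝ)) *ᵥ v from rfl, h1]
          rw [dotProduct_smul, hvv]
          simp
        rw [hz]
        exact hasDerivAt_const t v
    · -- subset
      rintro J ⟨S, ω, hmeas, hpsd, hlow, hup, hinit, hode, hJ⟩
      obtain ⟨h1, h2, h3, h4, h5, h6⟩ :=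
        key_lemma n m hnm a b T ha hab hT S ω hpsd hlow hup hinit hode
      refine ⟨blockExt a T n m S, vecExt n m ω, ?_, h1, h2, h3, h4, h5, ?_⟩
      · intro i j
        by_cases hi : (i : ℕ) < n
        · by_cases hj : (j : ℕ) < n
          · simpa [blockExt, hi, hj] using hmeas ⟨i, hi⟩ ⟨j, hj⟩
          · simp [blockExt, hi, hj]
        · simp [blockExt, hi]
      · rw [hJ, h6]
  · -- concrete statement
    intro S ω hpsd hlow hup hinit hode
    exact key_lemma n m hnm a b T ha hab hT S ω hpsd hlow hup hinit hode
end

section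
/- If S satisfies the persistent excitation condition a·I ≤ ∫ₜ^{t+T} S dτ ≤ b·I for all t ≥ 0, and μ = μ(a,b,n) denotes the minimal cost of the optimal control problem over one period, then the fundamental matrix satisfies ‖Φ_S(t,s)‖ ≤ e^{-μ·⌊(t-s)/T⌋} for all t ≥ s ≥ 0. -/
open Matrix MeasureTheory intervalIntegral

attribute [local instance] Matrix.normedAddCommGroup Matrix.normedSpace

section AuxMatrixDecay

variable {n : ℕ}

lemma psd_diag_nonneg {M : Matrix (Fin n) (Fin n) ℝ} (h : M.PosSemidef) (i : Fin n) :
    0 ≤ M i i := by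
  have := h.dotProduct_mulVec_nonneg (Pi.single i 1)
  simpa [Matrix.mulVec_single, single_dotProduct] using this

lemma psd_entry_sq_le {M : Matrix (Fin n) (Fin n) ℝ} (h : M.PosSemidef) (i j : Fin n) :
    (M i j) ^ 2 ≤ M i i * M j j := by
  have key : ∀ t : ℝ, 0 ≤ M j j * (t * t) + (2 * M i j) * t + M i i := by
    intro t
    have hx := h.dotProduct_mulVec_nonneg ((Pi.single i (1:ℝ) : Fin n → ℝ) + t • (Pi.single j (1:ℝ) : Fin n → ℝ))
    have hsym : M j i = M i j := by
      have := h.1.apply j i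
      simpa using this.symm
    simp only [star_add, star_smul, star_trivial, Matrix.mulVec_add, Matrix.mulVec_smul,
      add_dotProduct, smul_dotProduct, dotProduct_add,
      dotProduct_smul, Matrix.mulVec_single_one, Matrix.col_apply, single_dotProduct,
      dotProduct_single, smul_eq_mul, mul_one, one_mul] at hx
    rw [hsym] at hx
    ring_nf at hx ⊢
    linarith [hx]
  have hd := discrim_le_zero key
  simp only [discrim] at hd
  nlinarith [hd]

lemma psd_quad_le_trace {M : Matrix (Fin n) (Fin n) ℝ} (h : M.PosSemidef) (w : Fin n → ℝ) :
    w ⬝ᵥ M.mulVec w ≤ (∑ i, M i i) * (∑ i, w i ^ 2) := by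
  have habs : ∀ i j : Fin n, |M i j| ≤ Real.sqrt (M i i) * Real.sqrt (M j j) := by
    intro i j
    rw [← Real.sqrt_mul (psd_diag_nonneg h i), ← Real.sqrt_sq_eq_abs]
    exact Real.sqrt_le_sqrt (psd_entry_sq_le h i j)
  have step1 : w ⬝ᵥ M.mulVec w ≤ (∑ i, |w i| * Real.sqrt (M i i)) ^ 2 := by
    have : w ⬝ᵥ M.mulVec w = ∑ i, ∑ j, w i * (M i j * w j) := by
      simp [dotProduct, Matrix.mulVec, Finset.mul_sum]
    rw [this, sq, Finset.sum_mul_sum]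
    apply Finset.sum_le_sum; intro i _
    apply Finset.sum_le_sum; intro j _
    calc w i * (M i j * w j) ≤ |w i * (M i j * w j)| := le_abs_self _
      _ = |w i| * (|M i j| * |w j|) := by simp [abs_mul]
      _ ≤ |w i| * ((Real.sqrt (M i i) * Real.sqrt (M j j)) * |w j|) := by
          apply mul_le_mul_of_nonneg_left _ (abs_nonneg _)
          exact mul_le_mul_of_nonneg_right (habs i j) (abs_nonneg _)
      _ = |w i| * Real.sqrt (M i i) * (|w j| * Real.sqrt (M j j)) := by ring
  have step2 : (∑ i, |w i| * Real.sqrt (M i i)) ^ 2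
      ≤ (∑ i, w i ^ 2) * (∑ i, M i i) := by
    have := Finset.sum_mul_sq_le_sq_mul_sq Finset.univ (fun i => |w i|) (fun i => Real.sqrt (M i i))
    calc (∑ i, |w i| * Real.sqrt (M i i)) ^ 2
        ≤ (∑ i, |w i| ^ 2) * (∑ i, Real.sqrt (M i i) ^ 2) := this
      _ = (∑ i, w i ^ 2) * (∑ i, M i i) := by
          congr 1
          · exact Finset.sum_congr rfl fun i _ => sq_abs _
          · exact Finset.sum_congr rfl fun i _ => Real.sq_sqrt (psd_diag_nonneg h i)
  calc w ⬝ᵥ M.mulVec w ≤ (∑ i, |w i| * Real.sqrt (M i i)) ^ 2 := step1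
    _ ≤ (∑ i, w i ^ 2) * (∑ i, M i i) := step2
    _ = (∑ i, M i i) * (∑ i, w i ^ 2) := mul_comm _ _

lemma measurable_det_comp {f : ℝ → Matrix (Fin n) (Fin n) ℝ}
    (hf : ∀ i j, Measurable fun t => f t i j) :
    Measurable fun t => (f t).det := by
  simp_rw [Matrix.det_apply, Units.smul_def, zsmul_eq_mul]
  apply Finset.measurable_sum
  intro σ _
  exact (measurable_const.mul (Finset.measurable_prod _ fun i _ => hf (σ i) i))

lemma measurable_inv_entry {f : ℝ → Matrix (Fin n) (Fin n) ℝ}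
    (hf : ∀ i j, Measurable fun t => f t i j) (i j : Fin n) :
    Measurable fun t => (f t)⁻¹ i j := by
  simp_rw [Matrix.inv_def, Matrix.smul_apply, Matrix.adjugate_apply, smul_eq_mul,
    Ring.inverse_eq_inv']
  apply Measurable.mul
  · exact (measurable_det_comp hf).inv
  · apply measurable_det_comp
    intro k l
    simp_rw [Matrix.updateRow_apply]
    by_cases hk : k = j
    · simp only [hk, if_pos rfl]; exact measurable_const
    · simp only [if_neg hk]; exact hf k l

lemma window_integrable {T : ℝ} {g : ℝ → ℝ}
    (hwin : ∀ t, 0 ≤ t → IntervalIntegrable g volume t (t + T))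
    (hT : 0 < T) {p q : ℝ} (hp : 0 ≤ p) (hpq : p ≤ q) :
    IntervalIntegrable g volume p q := by
  have key : ∀ m : ℕ, IntervalIntegrable g volume p (p + m * T) := by
    intro m
    induction m with
    | zero => simp
    | succ m ih =>
        have h2 : IntervalIntegrable g volume (p + m * T) (p + m * T + T) :=
          hwin _ (by positivity)
        have heq : p + ((m+1 : ℕ) : ℝ) * T = p + ↑m * T + T := by push_cast; ring
        rw [heq]; exact ih.trans h2
  obtain ⟨m, hm⟩ := exists_nat_gt ((q - p) / T)
  have hqle : q ≤ p + m * T := by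
    rw [div_lt_iff₀ hT] at hm; linarith
  exact (key m).mono_set (by
    rw [Set.uIcc_of_le hpq, Set.uIcc_of_le (le_trans hpq hqle)]
    exact Set.Icc_subset_Icc le_rfl hqle)

lemma hasDerivAt_entry {Φf : ℝ → Matrix (Fin n) (Fin n) ℝ} {D : Matrix (Fin n) (Fin n) ℝ}
    {τ : ℝ} (h : HasDerivAt Φf D τ) (i j : Fin n) :
    HasDerivAt (fun τ => Φf τ i j) (D i j) τ := by
  have h1 : HasDerivAt (fun τ => Φf τ i) (D i) τ := hasDerivAt_pi.1 h i
  exact hasDerivAt_pi.1 h1 j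

lemma hasDerivAt_mulVec {Φf : ℝ → Matrix (Fin n) (Fin n) ℝ} {D : Matrix (Fin n) (Fin n) ℝ}
    {τ : ℝ} (h : HasDerivAt Φf D τ) (v : Fin n → ℝ) :
    HasDerivAt (fun τ => (Φf τ).mulVec v) (D.mulVec v) τ := by
  rw [hasDerivAt_pi]
  intro i
  simp only [Matrix.mulVec, dotProduct]
  exact HasDerivAt.fun_sum (fun j _ => (hasDerivAt_entry h i j).mul_const (v j))

lemma hasDerivAt_sumsq {x : ℝ → Fin n → ℝ} {x' : Fin n → ℝ} {τ : ℝ}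
    (h : HasDerivAt x x' τ) :
    HasDerivAt (fun τ => ∑ i, x τ i ^ 2) (2 * (x τ ⬝ᵥ x')) τ := by
  have : HasDerivAt (fun τ => ∑ i, x τ i ^ 2) (∑ i, 2 * x τ i * x' i) τ :=
    HasDerivAt.fun_sum (fun i _ => by
      simpa [mul_comm, mul_assoc, Pi.pow_def] using ((hasDerivAt_pi.1 h i).pow 2))
  convert this using 1
  simp only [dotProduct, Finset.mul_sum]
  exact Finset.sum_congr rfl fun i _ => by ring

lemma traj_pos (S : ℝ → Matrix (Fin n) (Fin n) ℝ)
    (hSpsd : ∀ t, 0 ≤ t → (S t).PosSemidef)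
    (hcint : ∀ p q : ℝ, 0 ≤ p → p ≤ q →
      IntervalIntegrable (fun t => ∑ i, S t i i) volume p q)
    (x : ℝ → Fin n → ℝ)
    (hx : ∀ τ, HasDerivAt x (-(S τ).mulVec (x τ)) τ)
    {s : ℝ} (hs : 0 ≤ s) (h0 : 0 < ∑ i, x s i ^ 2) :
    ∀ t, s ≤ t → 0 < ∑ i, x t i ^ 2 := by
  intro t hst
  set g : ℝ → ℝ := fun τ => ∑ i, x τ i ^ 2 with hgdef
  set G : ℝ → ℝ := fun τ => -2 * (x τ ⬝ᵥ (S τ).mulVec (x τ)) with hGdef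
  set c : ℝ → ℝ := fun τ => ∑ i, S τ i i with hcdef
  have hg : ∀ τ, HasDerivAt g (G τ) τ := by
    intro τ
    have := hasDerivAt_sumsq (hx τ)
    convert this using 1
    simp [hGdef, dotProduct_neg]
  have hgnonneg : ∀ τ, 0 ≤ g τ := fun τ => Finset.sum_nonneg fun i _ => sq_nonneg _
  have hgcont : Continuous g := by
    rw [continuous_iff_continuousAt]; exact fun τ => (hg τ).continuousAt
  have hGmeas : Measurable G := by
    have : G = deriv g := funext fun τ => ((hg τ).deriv).symm
    rw [this]; exact measurable_deriv g
  have hcnonneg : ∀ τ, 0 ≤ τ → 0 ≤ c τ :=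
    fun τ hτ => Finset.sum_nonneg fun i _ => psd_diag_nonneg (hSpsd τ hτ) i
  have h0' : 0 < g s := h0
  by_contra hcon
  have hgt0 : g t = 0 := le_antisymm (not_lt.1 hcon) (hgnonneg t)
  set Z : Set ℝ := Set.Icc s t ∩ {τ | g τ = 0} with hZdef
  have hZne : Z.Nonempty := ⟨t, ⟨hst, le_rfl⟩, hgt0⟩
  have hZclosed : IsClosed Z :=
    IsClosed.inter isClosed_Icc (isClosed_eq hgcont continuous_const)
  have hZbdd : BddBelow Z := ⟨s, fun τ hτ => hτ.1.1⟩
  set t0 := sInf Z with ht0def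
  have ht0mem : t0 ∈ Z := hZclosed.csInf_mem hZne hZbdd
  have hst0 : s < t0 := by
    rcases lt_or_eq_of_le ht0mem.1.1 with h | h
    · exact h
    · exfalso; rw [← h] at ht0mem; exact (ne_of_gt h0').symm ht0mem.2.symm
  have hgpos : ∀ τ, s ≤ τ → τ < t0 → 0 < g τ := by
    intro τ h1 h2
    rcases (hgnonneg τ).lt_or_eq with h | h
    · exact h
    · exfalso
      have : τ ∈ Z := ⟨⟨h1, h2.le.trans ht0mem.1.2⟩, h.symm⟩
      exact absurd (csInf_le hZbdd this) (not_le.2 h2)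
  set M : ℝ := ∫ σ in s..t0, 2 * c σ with hMdef
  have hint2c : ∀ p q : ℝ, 0 ≤ p → p ≤ q → IntervalIntegrable (fun σ => 2 * c σ) volume p q :=
    fun p q hp hpq => (hcint p q hp hpq).const_mul 2
  have key : ∀ τ, s ≤ τ → τ < t0 → Real.exp (Real.log (g s) - M) ≤ g τ := by
    intro τ h1 h2
    have hτ0 : 0 ≤ τ := hs.trans h1
    have hposon : ∀ σ, σ ∈ Set.Icc s τ → 0 < g σ :=
      fun σ hσ => hgpos σ hσ.1 (lt_of_le_of_lt hσ.2 h2)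
    set φ : ℝ → ℝ := fun σ => G σ / g σ with hφdef
    have hbound : ∀ σ, σ ∈ Set.Icc s τ → (-(2 * c σ) ≤ φ σ ∧ φ σ ≤ 0) := by
      intro σ hσ
      have hσ0 : 0 ≤ σ := hs.trans hσ.1
      have hq : 0 ≤ x σ ⬝ᵥ (S σ).mulVec (x σ) := by simpa using (hSpsd σ hσ0).dotProduct_mulVec_nonneg (x σ)
      have hquad := psd_quad_le_trace (hSpsd σ hσ0) (x σ)
      have hgσ := hposon σ hσ
      constructor
      · show -(2 * c σ) ≤ G σ / g σ
        rw [le_div_iff₀ hgσ]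
        have hcs : c σ = ∑ i, S σ i i := rfl
        have hGs : G σ = -2 * (x σ ⬝ᵥ (S σ).mulVec (x σ)) := rfl
        have hgs : g σ = ∑ i, x σ i ^ 2 := rfl
        rw [hcs, hGs, hgs]
        nlinarith [hquad]
      · show G σ / g σ ≤ 0
        apply div_nonpos_of_nonpos_of_nonneg _ (hgσ.le)
        have hGs : G σ = -2 * (x σ ⬝ᵥ (S σ).mulVec (x σ)) := rfl
        rw [hGs]
        nlinarith [hq]
    have hφint : IntervalIntegrable φ volume s τ := by
      apply (hint2c s τ hs h1).mono_fun
        ((hGmeas.div hgcont.measurable).aestronglyMeasurable)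
      · rw [Filter.EventuallyLE, ae_restrict_iff' measurableSet_uIoc]
        apply Filter.Eventually.of_forall
        intro σ hσ
        rw [Set.uIoc_of_le h1] at hσ
        have hσ' : σ ∈ Set.Icc s τ := ⟨hσ.1.le, hσ.2⟩
        obtain ⟨hb1, hb2⟩ := hbound σ hσ'
        have hc0 : 0 ≤ c σ := hcnonneg σ (hs.trans hσ'.1)
        rw [Real.norm_eq_abs, Real.norm_eq_abs]
        change |φ σ| ≤ _
        rw [abs_of_nonpos hb2, abs_of_nonneg (by linarith)]
        linarith
    have hftc : ∫ σ in s..τ, φ σ = Real.log (g τ) - Real.log (g s) := by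
      apply integral_eq_sub_of_hasDerivAt
      · intro σ hσ
        rw [Set.uIcc_of_le h1] at hσ
        exact (hg σ).log (ne_of_gt (hposon σ hσ))
      · exact hφint
    have hmono : ∫ σ in s..τ, -(2 * c σ) ≤ ∫ σ in s..τ, φ σ := by
      apply integral_mono_on h1 ((hint2c s τ hs h1).neg) hφint
      intro σ hσ; exact (hbound σ hσ).1
    have hM2 : ∫ σ in s..τ, 2 * c σ ≤ M := by
      rw [hMdef, ← intervalIntegral.integral_add_adjacent_intervals
        (hint2c s τ hs h1) (hint2c τ t0 hτ0 h2.le)]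
      have : 0 ≤ ∫ σ in τ..t0, 2 * c σ := by
        apply intervalIntegral.integral_nonneg h2.le
        intro u hu; have : 0 ≤ u := hτ0.trans hu.1
        have := hcnonneg u this; linarith
      linarith
    have hlog : Real.log (g s) - M ≤ Real.log (g τ) := by
      rw [intervalIntegral.integral_neg] at hmono
      rw [hftc] at hmono
      linarith
    calc Real.exp (Real.log (g s) - M) ≤ Real.exp (Real.log (g τ)) := Real.exp_le_exp.2 hlog
      _ = g τ := Real.exp_log (hposon τ ⟨h1, le_rfl⟩)
  have htend : Filter.Tendsto g (nhdsWithin t0 (Set.Iio t0)) (nhds (g t0)) :=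
    (hgcont.continuousAt).continuousWithinAt.tendsto
  have hev : ∀ᶠ τ in nhdsWithin t0 (Set.Iio t0), Real.exp (Real.log (g s) - M) ≤ g τ := by
    filter_upwards [Ioo_mem_nhdsLT_of_mem (⟨hst0, le_rfl⟩ : t0 ∈ Set.Ioc s t0)] with τ hτ
    exact key τ hτ.1.le hτ.2
  have := ge_of_tendsto htend hev
  rw [ht0mem.2] at this
  exact absurd this (not_le.2 (Real.exp_pos _))

end AuxMatrixDecay

/-- If `S` satisfies the persistent excitation condition on windows of length `T`
and `μ = μ(a,b,n)` is the minimal cost of the one-period optimal control problem,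
then the fundamental matrix satisfies `‖Φ(t,s)v‖ ≤ e^{-μ⌊(t-s)/T⌋}‖v‖` for all
`t ≥ s ≥ 0` (Euclidean norms), i.e. `‖Φ(t,s)‖ ≤ e^{-μ⌊(t-s)/T⌋}`. -/
theorem fundamental_matrix_decay (n : ℕ) (a b T : ℝ) (ha : 0 < a) (hab : a ≤ b)
    (hT : 0 < T)
    (S : ℝ → Matrix (Fin n) (Fin n) ℝ)
    (hSpsd : ∀ t, 0 ≤ t → (S t).PosSemidef)
    (hPE : ∀ t, 0 ≤ t →
      ((Matrix.of fun i j => ∫ τ in t..(t + T), S τ i j)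
          - a • (1 : Matrix (Fin n) (Fin n) ℝ)).PosSemidef ∧
      (b • (1 : Matrix (Fin n) (Fin n) ℝ)
          - Matrix.of fun i j => ∫ τ in t..(t + T), S τ i j).PosSemidef)
    (Φ : ℝ → ℝ → Matrix (Fin n) (Fin n) ℝ)
    (hΦ0 : ∀ s, Φ s s = 1)
    (hΦ : ∀ s t, HasDerivAt (fun τ => Φ τ s) (-(S t) * Φ t s) t) :
    ∀ s t, 0 ≤ s → s ≤ t → ∀ v : Fin n → ℝ,
      Real.sqrt (∑ i, ((Φ t s).mulVec v i) ^ 2)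
        ≤ Real.exp (-(sInf (costSet a b T n)) * (⌊(t - s) / T⌋ : ℝ))
            * Real.sqrt (∑ i, v i ^ 2) := by
  intro s t hs hst v
  by_cases hv : v = 0
  · subst hv
    simp [Matrix.mulVec_zero]
  set μ := sInf (costSet a b T n) with hμdef
  -- diagonal entries of S are locally interval integrable on [0,∞)
  have hdiag : ∀ p q : ℝ, 0 ≤ p → p ≤ q →
      IntervalIntegrable (fun τ => ∑ i, S τ i i) volume p q := by
    intro p q hp hpq
    apply window_integrable ?_ hT hp hpq
    intro t' ht'
    have hone : ∀ i : Fin n, IntervalIntegrable (fun τ => S τ i i) volume t' (t' + T) := by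
      intro i
      by_contra hni
      have h0 : (∫ τ in t'..(t'+T), S τ i i) = 0 := intervalIntegral.integral_undef hni
      have hd := psd_diag_nonneg (hPE t' ht').1 i
      rw [Matrix.sub_apply, Matrix.of_apply, Matrix.smul_apply, Matrix.one_apply_eq,
        smul_eq_mul, mul_one, h0] at hd
      linarith
    rw [intervalIntegrable_iff]
    apply MeasureTheory.integrable_finset_sum
    intro i _
    rw [← IntegrableOn]
    exact intervalIntegrable_iff.1 (hone i)
  -- derivative and positivity machinery
  have hFder : ∀ τ, HasDerivAt (fun σ => Φ σ 0) (-(S τ) * Φ τ 0) τ := fun τ => hΦ 0 τ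
  have hFentcont : ∀ i j, Continuous fun τ => Φ τ 0 i j := by
    intro i j; rw [continuous_iff_continuousAt]
    exact fun τ => (hasDerivAt_entry (hFder τ) i j).continuousAt
  have hxderiv : ∀ (r : ℝ) (w : Fin n → ℝ) (σ : ℝ),
      HasDerivAt (fun σ => (Φ σ r).mulVec w) (-(S σ).mulVec ((Φ σ r).mulVec w)) σ := by
    intro r w σ
    have := hasDerivAt_mulVec (hΦ r σ) w
    rwa [← Matrix.mulVec_mulVec, Matrix.neg_mulVec] at this
  have hsumsq_pos : ∀ w : Fin n → ℝ, w ≠ 0 → 0 < ∑ i, w i ^ 2 := by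
    intro w hw
    obtain ⟨i, hwi⟩ := Function.ne_iff.1 hw
    apply Finset.sum_pos' (fun j _ => sq_nonneg _)
    exact ⟨i, Finset.mem_univ i,
      (sq_nonneg _).lt_of_ne (Ne.symm (pow_ne_zero 2 hwi))⟩
  have hpos : ∀ r : ℝ, 0 ≤ r → ∀ w : Fin n → ℝ, w ≠ 0 → ∀ τ, r ≤ τ →
      0 < ∑ i, ((Φ τ r).mulVec w) i ^ 2 := by
    intro r hr w hw τ hτ
    have h0 : 0 < ∑ i, ((Φ r r).mulVec w) i ^ 2 := by
      rw [hΦ0 r, Matrix.one_mulVec]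
      exact hsumsq_pos w hw
    exact traj_pos S hSpsd hdiag _ (hxderiv r w) hr h0 τ hτ
  -- invertibility of the fundamental matrix based at 0
  have hinv : ∀ τ, 0 ≤ τ → IsUnit (Φ τ 0).det := by
    intro τ hτ
    rw [isUnit_iff_ne_zero]
    intro hdet
    obtain ⟨w, hw0, hww⟩ := Matrix.exists_mulVec_eq_zero_iff.2 hdet
    have := hpos 0 le_rfl w hw0 τ hτ
    rw [hww] at this
    simp at this
  -- measurable version of S
  set Sm : ℝ → Matrix (Fin n) (Fin n) ℝ :=
    fun τ => (Matrix.of fun i j => -(deriv (fun σ => Φ σ 0 i j) τ)) * (Φ τ 0)⁻¹ with hSmdef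
  have hSmeq : ∀ τ, 0 ≤ τ → Sm τ = S τ := by
    intro τ hτ
    have h1 : (Matrix.of fun i j => -(deriv (fun σ => Φ σ 0 i j) τ)) = S τ * Φ τ 0 := by
      ext i j
      rw [Matrix.of_apply, (hasDerivAt_entry (hFder τ) i j).deriv]
      simp [Matrix.neg_mul]
    have h2 : Sm τ = (S τ * Φ τ 0) * (Φ τ 0)⁻¹ := by simp only [hSmdef]; rw [h1]
    rw [h2, Matrix.mul_assoc, Matrix.mul_nonsing_inv _ (hinv τ hτ), Matrix.mul_one]
  have hSmmeas : ∀ i j, Measurable fun τ => Sm τ i j := by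
    intro i j
    simp only [hSmdef, Matrix.mul_apply]
    apply Finset.measurable_sum
    intro k _
    apply Measurable.mul
    · simp only [Matrix.of_apply]
      exact (measurable_deriv _).neg
    · exact measurable_inv_entry (fun i j => (hFentcont i j).measurable) k j
  -- lower bound for the cost set
  have hbdd : BddBelow (costSet a b T n) := by
    refine ⟨0, ?_⟩
    rintro J ⟨S', ω', -, hpsd', -, -, -, -, rfl⟩
    apply intervalIntegral.integral_nonneg hT.le
    intro u hu
    simpa using (hpsd' u hu).dotProduct_mulVec_nonneg (ω' u)
  -- the trajectory
  set x : ℝ → Fin n → ℝ := fun τ => (Φ τ s).mulVec v with hxdef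
  set g : ℝ → ℝ := fun τ => ∑ i, x τ i ^ 2 with hgdef
  have hxder : ∀ τ, HasDerivAt x (-(S τ).mulVec (x τ)) τ := hxderiv s v
  have hgder : ∀ τ, HasDerivAt g (-2 * (x τ ⬝ᵥ (S τ).mulVec (x τ))) τ := by
    intro τ
    have := hasDerivAt_sumsq (hxder τ)
    convert this using 1
    simp [dotProduct_neg]
  have hgpos : ∀ τ, s ≤ τ → 0 < g τ := by
    intro τ hτ
    have h0 : 0 < ∑ i, x s i ^ 2 := by
      rw [hxdef]
      simp only [hΦ0 s, Matrix.one_mulVec]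
      exact hsumsq_pos v hv
    exact traj_pos S hSpsd hdiag x hxder hs h0 τ hτ
  have hgcont : Continuous g := by
    rw [continuous_iff_continuousAt]; exact fun τ => (hgder τ).continuousAt
  have hGmeas : Measurable (fun τ => -2 * (x τ ⬝ᵥ (S τ).mulVec (x τ))) := by
    have : (fun τ => -2 * (x τ ⬝ᵥ (S τ).mulVec (x τ))) = deriv g :=
      funext fun τ => ((hgder τ).deriv).symm
    rw [this]; exact measurable_deriv g
  -- one-window decay
  have hwindow : ∀ p, s ≤ p → g (p + T) ≤ Real.exp (-2 * μ) * g p := by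
    intro p hp
    have hp0 : 0 ≤ p := hs.trans hp
    set r : ℝ → ℝ := fun u => Real.sqrt (g (p + u)) with hrdef
    set ω : ℝ → Fin n → ℝ := fun u i => x (p + u) i / r u with hωdef
    set Sj : ℝ → Matrix (Fin n) (Fin n) ℝ := fun u => Sm (p + u) with hSjdef
    have hSjS : ∀ u : ℝ, 0 ≤ u → Sj u = S (p + u) := by
      intro u hu
      rw [hSjdef]
      exact hSmeq _ (by linarith)
    have hODE : ∀ u ∈ Set.Icc (0:ℝ) T, HasDerivAt ω
        (-(Sj u).mulVec (ω u) + (ω u ⬝ᵥ (Sj u).mulVec (ω u)) • ω u) u := by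
      intro u hu
      have hτs : s ≤ p + u := by linarith [hu.1]
      have hgτ : 0 < g (p + u) := hgpos _ hτs
      have hru : 0 < r u := Real.sqrt_pos.2 hgτ
      have htrans : HasDerivAt (fun u' : ℝ => p + u') 1 u := by
        simpa using (hasDerivAt_id u).const_add p
      have hxu : ∀ i, HasDerivAt (fun u' => x (p + u') i)
          ((-(S (p+u)).mulVec (x (p+u))) i) u := by
        intro i
        have h1 : HasDerivAt (fun τ => x τ i) ((-(S (p+u)).mulVec (x (p+u))) i) (p+u) :=
          hasDerivAt_pi.1 (hxder (p+u)) i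
        have := h1.comp u htrans
        simpa [Function.comp_def] using this
      have hgu : HasDerivAt (fun u' => g (p + u'))
          (-2 * (x (p+u) ⬝ᵥ (S (p+u)).mulVec (x (p+u)))) u := by
        have := (hgder (p+u)).comp u htrans
        simpa [Function.comp_def] using this
      have hrd : HasDerivAt r
          (1 / (2 * Real.sqrt (g (p+u))) * (-2 * (x (p+u) ⬝ᵥ (S (p+u)).mulVec (x (p+u))))) u := by
        have := (Real.hasDerivAt_sqrt (ne_of_gt hgτ)).comp u hgu
        simpa [hrdef, Function.comp_def] using this
      rw [hasDerivAt_pi]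
      intro i
      have hωi := (hxu i).div hrd (ne_of_gt hru)
      have hrsq : r u = Real.sqrt (g (p+u)) := rfl
      refine HasDerivAt.congr_deriv hωi ?_
      symm
      have hSju : Sj u = S (p + u) := hSjS u hu.1
      have hωu : ω u = (r u)⁻¹ • x (p + u) := by
        funext i; simp [hωdef, div_eq_inv_mul]
      rw [hSju, hωu]
      simp only [Pi.add_apply, Pi.neg_apply, Pi.smul_apply, smul_eq_mul,
        Matrix.mulVec_smul, smul_dotProduct, dotProduct_smul]
      rw [← hrsq]
      field_simp
      ring
    have hJset : (∫ u in (0:ℝ)..T, ω u ⬝ᵥ (Sj u).mulVec (ω u)) ∈ costSet a b T n := by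
      refine ⟨Sj, ω, ?_, ?_, ?_, ?_, ?_, hODE, rfl⟩
      · intro i j
        exact (hSmmeas i j).comp (measurable_const.add measurable_id)
      · intro u hu
        rw [hSjS u hu.1]
        exact hSpsd _ (by linarith [hu.1])
      · have hmat : (Matrix.of fun i j => ∫ u in (0:ℝ)..T, Sj u i j)
            = Matrix.of fun i j => ∫ τ in p..(p+T), S τ i j := by
          ext i j
          simp only [Matrix.of_apply]
          have h1 : (∫ u in (0:ℝ)..T, Sj u i j)
              = ∫ u in (0:ℝ)..T, (fun τ => Sm τ i j) (p + u) := rfl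
          rw [h1, intervalIntegral.integral_comp_add_left (fun τ => Sm τ i j) p, add_zero]
          apply intervalIntegral.integral_congr
          intro τ hτ
          rw [Set.uIcc_of_le (by linarith : p ≤ p + T)] at hτ
          have hτ0 : 0 ≤ τ := by linarith [hτ.1]
          show Sm τ i j = S τ i j
          rw [hSmeq τ hτ0]
        rw [hmat]; exact (hPE p hp0).1
      · have hmat : (Matrix.of fun i j => ∫ u in (0:ℝ)..T, Sj u i j)
            = Matrix.of fun i j => ∫ τ in p..(p+T), S τ i j := by
          ext i j
          simp only [Matrix.of_apply]
          have h1 : (∫ u in (0:ℝ)..T, Sj u i j)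
              = ∫ u in (0:ℝ)..T, (fun τ => Sm τ i j) (p + u) := rfl
          rw [h1, intervalIntegral.integral_comp_add_left (fun τ => Sm τ i j) p, add_zero]
          apply intervalIntegral.integral_congr
          intro τ hτ
          rw [Set.uIcc_of_le (by linarith : p ≤ p + T)] at hτ
          have hτ0 : 0 ≤ τ := by linarith [hτ.1]
          show Sm τ i j = S τ i j
          rw [hSmeq τ hτ0]
        rw [hmat]; exact (hPE p hp0).2
      · have hgp : 0 < g p := hgpos p hp
        have h1 : ∑ i, ω 0 i ^ 2 = (∑ i, x p i ^ 2) / g p := by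
          rw [Finset.sum_div]
          apply Finset.sum_congr rfl
          intro i _
          show (x (p + 0) i / r 0) ^ 2 = x p i ^ 2 / g p
          rw [hrdef]
          simp only [add_zero]
          rw [div_pow, Real.sq_sqrt hgp.le]
        rw [h1]
        exact div_self (ne_of_gt hgp)
    have hμJ : μ ≤ ∫ u in (0:ℝ)..T, ω u ⬝ᵥ (Sj u).mulVec (ω u) := csInf_le hbdd hJset
    -- identify the cost with the logarithmic decrement
    set φ : ℝ → ℝ := fun τ => -2 * (x τ ⬝ᵥ (S τ).mulVec (x τ)) / g τ with hφdef
    have hposon : ∀ σ, σ ∈ Set.Icc p (p+T) → 0 < g σ :=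
      fun σ hσ => hgpos σ (hp.trans hσ.1)
    have hφint : IntervalIntegrable φ volume p (p+T) := by
      apply IntervalIntegrable.mono_fun ((hdiag p (p+T) hp0 (by linarith)).const_mul 2)
        ((hGmeas.div hgcont.measurable).aestronglyMeasurable)
      rw [Filter.EventuallyLE, ae_restrict_iff' measurableSet_uIoc]
      apply Filter.Eventually.of_forall
      intro σ hσ
      rw [Set.uIoc_of_le (by linarith : p ≤ p + T)] at hσ
      have hσ' : σ ∈ Set.Icc p (p+T) := ⟨hσ.1.le, hσ.2⟩
      have hσ0 : 0 ≤ σ := hp0.trans hσ'.1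
      have hgσ := hposon σ hσ'
      have hq : 0 ≤ x σ ⬝ᵥ (S σ).mulVec (x σ) := by simpa using (hSpsd σ hσ0).dotProduct_mulVec_nonneg (x σ)
      have hquad := psd_quad_le_trace (hSpsd σ hσ0) (x σ)
      have hφσ : φ σ = -2 * (x σ ⬝ᵥ (S σ).mulVec (x σ)) / g σ := rfl
      have hφ1 : φ σ ≤ 0 := by
        rw [hφσ]
        apply div_nonpos_of_nonpos_of_nonneg _ hgσ.le
        nlinarith
      have hφ2 : -(2 * (∑ i, S σ i i)) ≤ φ σ := by
        rw [hφσ, le_div_iff₀ hgσ]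
        have hgσ' : g σ = ∑ i, x σ i ^ 2 := rfl
        nlinarith [hquad]
      have hc0 : 0 ≤ ∑ i, S σ i i :=
        Finset.sum_nonneg fun i _ => psd_diag_nonneg (hSpsd σ hσ0) i
      rw [Real.norm_eq_abs, Real.norm_eq_abs]
      change |φ σ| ≤ _
      rw [abs_of_nonpos hφ1, abs_of_nonneg (by linarith)]
      linarith
    have hftc : ∫ σ in p..(p+T), φ σ = Real.log (g (p+T)) - Real.log (g p) := by
      apply integral_eq_sub_of_hasDerivAt (f := fun σ => Real.log (g σ))
      · intro σ hσ
        rw [Set.uIcc_of_le (by linarith : p ≤ p + T)] at hσ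
        exact (hgder σ).log (ne_of_gt (hposon σ hσ))
      · exact hφint
    have hJeq : (∫ u in (0:ℝ)..T, ω u ⬝ᵥ (Sj u).mulVec (ω u))
        = -(1/2) * (Real.log (g (p+T)) - Real.log (g p)) := by
      have hstep1 : (∫ u in (0:ℝ)..T, ω u ⬝ᵥ (Sj u).mulVec (ω u))
          = ∫ u in (0:ℝ)..T, (fun τ => -(1/2) * φ τ) (p + u) := by
        apply intervalIntegral.integral_congr
        intro u hu
        rw [Set.uIcc_of_le hT.le] at hu
        have hτs : s ≤ p + u := by linarith [hu.1]
        have hgτ : 0 < g (p + u) := hgpos _ hτs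
        have hru : 0 < r u := Real.sqrt_pos.2 hgτ
        have hrsq : r u ^ 2 = g (p + u) := Real.sq_sqrt hgτ.le
        have hωu : ω u = (r u)⁻¹ • x (p + u) := by
          funext i; simp [hωdef, div_eq_inv_mul]
        show ω u ⬝ᵥ (Sj u).mulVec (ω u) = -(1/2) * φ (p + u)
        rw [hSjS u hu.1, hωu]
        simp only [Matrix.mulVec_smul, smul_dotProduct, dotProduct_smul,
          smul_eq_mul]
        have hφσ : φ (p+u) = -2 * (x (p+u) ⬝ᵥ (S (p+u)).mulVec (x (p+u))) / g (p+u) := rfl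
        rw [hφσ, ← hrsq]
        ring
      rw [hstep1, intervalIntegral.integral_comp_add_left (fun τ => -(1/2) * φ τ) p, add_zero,
        intervalIntegral.integral_const_mul, hftc]
    rw [hJeq] at hμJ
    have hlog : Real.log (g (p+T)) ≤ Real.log (g p) + (-2 * μ) := by linarith
    calc g (p + T) = Real.exp (Real.log (g (p+T))) :=
          (Real.exp_log (hgpos _ (by linarith))).symm
      _ ≤ Real.exp (Real.log (g p) + (-2 * μ)) := Real.exp_le_exp.2 hlog
      _ = Real.exp (-2 * μ) * g p := by
          rw [Real.exp_add, Real.exp_log (hgpos p hp)]; ring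
  -- iterate the window decay
  have hiter : ∀ m : ℕ, g (s + m * T) ≤ Real.exp (-2 * μ * m) * g s := by
    intro m
    induction m with
    | zero => simp
    | succ m ih =>
        have h1 := hwindow (s + m * T) (by nlinarith [hT.le])
        have heq : s + ((m+1:ℕ):ℝ) * T = s + m * T + T := by push_cast; ring
        rw [heq]
        calc g (s + m*T + T) ≤ Real.exp (-2*μ) * g (s + m*T) := h1
          _ ≤ Real.exp (-2*μ) * (Real.exp (-2*μ*m) * g s) :=
              mul_le_mul_of_nonneg_left ih (Real.exp_pos _).le
          _ = Real.exp (-2*μ*((m:ℕ)+1:ℝ)) * g s := by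
              rw [← mul_assoc, ← Real.exp_add]; ring_nf
          _ = Real.exp (-2*μ*((m+1:ℕ):ℝ)) * g s := by push_cast; ring_nf
  -- monotonicity of g
  have hanti : AntitoneOn g (Set.Ici s) := by
    apply antitoneOn_of_deriv_nonpos (convex_Ici s) hgcont.continuousOn
    · intro τ _
      exact (hgder τ).differentiableAt.differentiableWithinAt
    · intro τ hτ
      rw [interior_Ici] at hτ
      rw [(hgder τ).deriv]
      have hτ0 : 0 ≤ τ := hs.trans (le_of_lt hτ)
      have hq : (0:ℝ) ≤ x τ ⬝ᵥ (S τ).mulVec (x τ) := by simpa using (hSpsd τ hτ0).dotProduct_mulVec_nonneg (x τ)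
      nlinarith [hq]
  -- put everything together
  set k : ℕ := (⌊(t - s) / T⌋).toNat with hkdef
  have hfl0 : (0:ℤ) ≤ ⌊(t - s) / T⌋ :=
    Int.floor_nonneg.2 (div_nonneg (by linarith) hT.le)
  have hkcast : ((⌊(t - s) / T⌋ : ℤ) : ℝ) = (k : ℝ) := by
    rw [hkdef]; exact_mod_cast (Int.toNat_of_nonneg hfl0).symm
  have hkT : s + k * T ≤ t := by
    have h1 : ((⌊(t - s) / T⌋ : ℤ) : ℝ) ≤ (t - s)/T := Int.floor_le _
    rw [hkcast, le_div_iff₀ hT] at h1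
    linarith
  have h1 : g t ≤ g (s + k * T) :=
    hanti (Set.mem_Ici.2 (by nlinarith [hT.le] : s ≤ s + (k:ℝ) * T)) (Set.mem_Ici.2 hst) hkT
  have h2 : g t ≤ Real.exp (-2 * μ * k) * g s := le_trans h1 (hiter k)
  have hgseq : g s = ∑ i, v i ^ 2 := by
    have hxs : x s = v := by
      show (Φ s s).mulVec v = v
      rw [hΦ0 s, Matrix.one_mulVec]
    show ∑ i, x s i ^ 2 = ∑ i, v i ^ 2
    rw [hxs]
  show Real.sqrt (g t) ≤ Real.exp (-μ * ((⌊(t - s) / T⌋ : ℤ) : ℝ)) * Real.sqrt (∑ i, v i ^ 2)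
  rw [hkcast, ← hgseq]
  calc Real.sqrt (g t) ≤ Real.sqrt (Real.exp (-2 * μ * k) * g s) := Real.sqrt_le_sqrt h2
    _ = Real.exp (-μ * k) * Real.sqrt (g s) := by
        rw [show Real.exp (-2 * μ * (k:ℝ)) = Real.exp (-μ * (k:ℝ)) ^ 2 by
          rw [sq, ← Real.exp_add]; ring_nf]
        rw [Real.sqrt_mul (sq_nonneg _), Real.sqrt_sq (Real.exp_pos _).le]
end
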